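/- Suppose 𝔄 = {A_n}_{n≥1} is admissible and f is a binary associative 𝔄-operation. If U is an 𝔄-ultrafilter idempotent for f with respect to 𝔄, then for every X ∈ U there exists an infinite sequence a = ⟨a₀, a₁, a₂,…⟩ of natural numbers such that every finite reduction of a with respect to {f} (i.e., every f-product f(a_{i₁}, f(a_{i₂}, …, a_{i_k})…) over a finite increasing sequence of indices i₁ < i₂ < ⋯ < i_k) lies in X. -/

import Mathlib

/-- A field of sets over `S`: a nonempty collection of subsets of `S` closed under
finite unions, finite intersections and complementation. -/
def IsFieldOfSets {S : Type*} (A : Set (Set S)) : Prop :=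
  A.Nonempty ∧ (∀ X ∈ A, ∀ Y ∈ A, X ∪ Y ∈ A) ∧ (∀ X ∈ A, ∀ Y ∈ A, X ∩ Y ∈ A) ∧
    ∀ X ∈ A, Xᶜ ∈ A

/-- `U` is an ultrafilter on the field of sets `A`. -/
def IsUltraOn {S : Type*} (A U : Set (Set S)) : Prop :=
  U ⊆ A ∧ (∀ X ∈ U, ∀ Y ∈ U, X ∩ Y ∈ U) ∧ Set.univ ∈ U ∧ ∅ ∉ U ∧
    ∀ X ∈ A, X ∈ U ∨ Xᶜ ∈ U

/-- An admissible family `𝔄 = {A_n}_{n ≥ 1}` of fields of sets over `ω^n`: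
each `A (n+1)` is a field of sets over `Fin (n+1) → ℕ`, the family is closed under
cyclic shifts `(a₁,…,aₙ) ↦ (a₂,…,aₙ,a₁)` of coordinates, and under slices obtained
by fixing the first coordinate.  (The value `A 0` is irrelevant.) -/
def Adm (A : ∀ n : ℕ, Set (Set (Fin n → ℕ))) : Prop :=
  (∀ n : ℕ, IsFieldOfSets (A (n + 1))) ∧
  (∀ n : ℕ, ∀ X ∈ A (n + 2),
      (fun a : Fin (n + 2) → ℕ => Fin.snoc (Fin.tail a) (a 0)) '' X ∈ A (n + 2)) ∧
  (∀ n : ℕ, ∀ X ∈ A (n + 2), ∀ c : ℕ,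
      {t : Fin (n + 1) → ℕ | (Fin.cons c t : Fin (n + 2) → ℕ) ∈ X} ∈ A (n + 1))

/-- `U` is an `𝔄`-ultrafilter: an ultrafilter on `A 1` satisfying the Fubini property:
for every `n ≥ 1` and `X ∈ A (n+1)`,
`{(a₁,…,aₙ) : {a_{n+1} : (a₁,…,a_{n+1}) ∈ X} ∈ U} ∈ A n`. -/
def IsAUltra (A : ∀ n : ℕ, Set (Set (Fin n → ℕ))) (U : Set (Set (Fin 1 → ℕ))) : Prop :=
  IsUltraOn (A 1) U ∧
  ∀ n : ℕ, ∀ X ∈ A (n + 2),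
    {a : Fin (n + 1) → ℕ |
      {t : Fin 1 → ℕ | (Fin.snoc a (t 0) : Fin (n + 2) → ℕ) ∈ X} ∈ U} ∈ A (n + 1)

/-- `f` is an (`m`-ary) `𝔄`-operation: for every `n ≥ 1` and `X ∈ A n`, the set
`{(a₁,…,a_{n+m-1}) : (a₁,…,a_{n-1}, f(a_n,…,a_{n+m-1})) ∈ X}` belongs to `A (n+m-1)`. -/
def IsAOp (A : ∀ n : ℕ, Set (Set (Fin n → ℕ))) {m : ℕ} (f : (Fin m → ℕ) → ℕ) : Prop :=
  ∀ p : ℕ, ∀ X ∈ A (p + 1),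
    {b : Fin (p + m) → ℕ |
      (Fin.snoc (fun i : Fin p => b (Fin.castAdd m i))
          (f (fun j : Fin m => b (Fin.natAdd p j))) : Fin (p + 1) → ℕ) ∈ X}
      ∈ A (p + m)


/-- The Fubini product ultrafilter `U ⊗ V` on `A 2`:
`U ⊗ V = {Y ∈ A 2 : {a : {b : (a,b) ∈ Y} ∈ V} ∈ U}`. -/
def otimes2 (A : ∀ n : ℕ, Set (Set (Fin n → ℕ))) (U V : Set (Set (Fin 1 → ℕ))) :
    Set (Set (Fin 2 → ℕ)) :=
  {Y ∈ A 2 | {a : Fin 1 → ℕ |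
      {b : Fin 1 → ℕ | (Fin.snoc a (b 0) : Fin 2 → ℕ) ∈ Y} ∈ V} ∈ U}

/-- For a binary operation `f` on `ω`, `f_*^𝔄(U,V) = {X ∈ A 1 : f⁻¹[X] ∈ U ⊗ V}`. -/
def fStar2 (A : ∀ n : ℕ, Set (Set (Fin n → ℕ))) (f : ℕ → ℕ → ℕ)
    (U V : Set (Set (Fin 1 → ℕ))) : Set (Set (Fin 1 → ℕ)) :=
  {X ∈ A 1 | {x : Fin 2 → ℕ | (fun _ : Fin 1 => f (x 0) (x 1)) ∈ X} ∈ otimes2 A U V}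

/-- `redList f a i l` is the `f`-product `f(a i, f(a j₁, f(a j₂, …)))` of the terms of
`a` along the indices `i :: l`. -/
def redList (f : ℕ → ℕ → ℕ) (a : ℕ → ℕ) : ℕ → List ℕ → ℕ
  | i, [] => a i
  | i, j :: l => f (a i) (redList f a j l)


/-- Shift of a set by `n` via `f`. -/
def shiftSet (f : ℕ → ℕ → ℕ) (Y : Set (Fin 1 → ℕ)) (n : ℕ) : Set (Fin 1 → ℕ) :=
  {b : Fin 1 → ℕ | (fun _ : Fin 1 => f n (b 0)) ∈ Y}

/-- Recursive Galvin–Glazer sequence of sets. -/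
noncomputable def gseq (f : ℕ → ℕ → ℕ) (U : Set (Set (Fin 1 → ℕ)))
    (step : ∀ Y ∈ U, ∃ n : ℕ, (fun _ : Fin 1 => n) ∈ Y ∧ Y ∩ shiftSet f Y n ∈ U)
    (X : Set (Fin 1 → ℕ)) (hX : X ∈ U) : ℕ → {Y : Set (Fin 1 → ℕ) // Y ∈ U}
  | 0 => ⟨X, hX⟩
  | k + 1 =>
    let p := gseq f U step X hX k
    ⟨p.1 ∩ shiftSet f p.1 (step p.1 p.2).choose, (step p.1 p.2).choose_spec.2⟩

/-- If `U` is an `𝔄`-ultrafilter idempotent for the binary associative `𝔄`-operation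
`f`, then every `X ∈ U` contains all finite reductions (`f`-products over finite
increasing sequences of indices) of some infinite sequence `a`. -/
theorem stmt11 (A : ∀ n : ℕ, Set (Set (Fin n → ℕ))) (hA : Adm A)
    (f : ℕ → ℕ → ℕ) (hassoc : ∀ a b c : ℕ, f (f a b) c = f a (f b c))
    (hf : IsAOp A (fun x : Fin 2 → ℕ => f (x 0) (x 1)))
    (U : Set (Set (Fin 1 → ℕ))) (hU : IsAUltra A U)
    (hidem : fStar2 A f U U = U) :
    ∀ X ∈ U, ∃ a : ℕ → ℕ, ∀ (i : ℕ) (l : List ℕ), List.Chain (· < ·) i l →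
      (fun _ : Fin 1 => redList f a i l) ∈ X := by
  intro X hX
  obtain ⟨hsub, hinter, huniv, hempty, hultra⟩ := hU.1
  -- the key step lemma from idempotency
  have step : ∀ Y ∈ U, ∃ n : ℕ, (fun _ : Fin 1 => n) ∈ Y ∧ Y ∩ shiftSet f Y n ∈ U := by
    intro Y hY
    have h2 : Y ∈ fStar2 A f U U := by rw [hidem]; exact hY
    obtain ⟨hYA, hY2A, hS⟩ := h2
    have hSY : Y ∩ {a : Fin 1 → ℕ | shiftSet f Y (a 0) ∈ U} ∈ U := by
      have heq : {a : Fin 1 → ℕ |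
          {b : Fin 1 → ℕ | (Fin.snoc a (b 0) : Fin 2 → ℕ) ∈
            {x : Fin 2 → ℕ | (fun _ : Fin 1 => f (x 0) (x 1)) ∈ Y}} ∈ U}
          = {a : Fin 1 → ℕ | shiftSet f Y (a 0) ∈ U} := by
        ext a
        have : {b : Fin 1 → ℕ | (Fin.snoc a (b 0) : Fin 2 → ℕ) ∈
            {x : Fin 2 → ℕ | (fun _ : Fin 1 => f (x 0) (x 1)) ∈ Y}} = shiftSet f Y (a 0) := by
          ext b
          simp only [Set.mem_setOf_eq, shiftSet]
          have e0 : (Fin.snoc a (b 0) : Fin 2 → ℕ) 0 = a 0 := by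
            simp [Fin.snoc]
          have e1 : (Fin.snoc a (b 0) : Fin 2 → ℕ) 1 = b 0 := by
            simp [Fin.snoc]
          rw [e0, e1]
        rw [Set.mem_setOf_eq, Set.mem_setOf_eq, this]
      rw [heq] at hS
      exact hinter _ hY _ hS
    have hne : (Y ∩ {a : Fin 1 → ℕ | shiftSet f Y (a 0) ∈ U}).Nonempty := by
      rcases Set.eq_empty_or_nonempty (Y ∩ {a : Fin 1 → ℕ | shiftSet f Y (a 0) ∈ U}) with h | h
      · rw [h] at hSY; exact absurd hSY hempty
      · exact h
    obtain ⟨t, htY, htS⟩ := hne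
    have ht : t = fun _ : Fin 1 => t 0 := by
      funext i
      rw [Fin.fin_one_eq_zero i]
    refine ⟨t 0, by rw [← ht]; exact htY, hinter _ hY _ htS⟩
  -- the recursive sequence
  set g := gseq f U step X hX with hg
  set a : ℕ → ℕ := fun k => (step (g k).1 (g k).2).choose with ha
  have hmem : ∀ k, (fun _ : Fin 1 => a k) ∈ (g k).1 :=
    fun k => (step (g k).1 (g k).2).choose_spec.1
  have hsucc : ∀ k, (g (k + 1)).1 = (g k).1 ∩ shiftSet f (g k).1 (a k) := fun k => rfl
  have hmono : ∀ i j, i ≤ j → (g j).1 ⊆ (g i).1 := by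
    intro i j hij
    induction j with
    | zero => rw [Nat.le_zero.mp hij]
    | succ k ih =>
      rcases Nat.lt_or_ge i (k + 1) with h | h
      · intro x hx
        rw [hsucc] at hx
        exact ih (Nat.lt_succ_iff.mp h) hx.1
      · rw [Nat.le_antisymm hij h]
  have main : ∀ (l : List ℕ) (i : ℕ), List.Chain (· < ·) i l →
      (fun _ : Fin 1 => redList f a i l) ∈ (g i).1 := by
    intro l
    induction l with
    | nil => intro i _; exact hmem i
    | cons j l ih =>
      intro i hc
      obtain ⟨hij, hcj⟩ := List.isChain_cons_cons.mp hc
      have hr : (fun _ : Fin 1 => redList f a j l) ∈ (g j).1 := ih j hcj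
      have hr2 : (fun _ : Fin 1 => redList f a j l) ∈ (g (i + 1)).1 := hmono _ _ hij hr
      rw [hsucc] at hr2
      exact hr2.2
  refine ⟨a, fun i l hc => ?_⟩
  have h0 : (g 0).1 = X := rfl
  exact h0 ▸ hmono 0 i (Nat.zero_le i) (main l i hc)
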